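/- Let H be a real Hilbert space and let G be a group acting on H by isometries (not necessarily linearly). If some orbit G·x is bounded, then there exists a point c ∈ H fixed by every element of G (the circumcenter of the bounded orbit). -/

import Mathlib

open Bornology Filter Metric

section Aux

variable {H : Type*} [NormedAddCommGroup H] [InnerProductSpace ℝ H] [CompleteSpace H]

/-- Key midpoint estimate: the squared distance from the midpoint of `c₁ c₂` to any point. -/
lemma midpoint_dist_sq (c₁ c₂ y : H) :
    dist (midpoint ℝ c₁ c₂) y ^ 2 =
      (2 * dist c₁ y ^ 2 + 2 * dist c₂ y ^ 2 - dist c₁ c₂ ^ 2) / 4 := by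
  have hpar := parallelogram_law_with_norm ℝ (c₁ - y) (c₂ - y)
  have h1 : (c₁ - y) + (c₂ - y) = (2 : ℝ) • (midpoint ℝ c₁ c₂ - y) := by
    rw [midpoint_eq_smul_add, invOf_eq_inv]
    module
  have h2 : (c₁ - y) - (c₂ - y) = c₁ - c₂ := by abel
  rw [h1, h2, norm_smul] at hpar
  simp only [Real.norm_ofNat] at hpar
  simp only [dist_eq_norm]
  nlinarith [norm_nonneg (midpoint ℝ c₁ c₂ - y)]

theorem exists_unique_circumcenter (S : Set H) (hne : S.Nonempty)
    (hbdd : IsBounded S) :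
    ∃! c : H, ∀ y ∈ S, dist c y ≤ ⨅ c' : H, ⨆ y : S, dist c' y := by
  haveI : Nonempty S := hne.to_subtype
  set r : H → ℝ := fun c => ⨆ y : S, dist c y with hr
  have hbdd' : ∀ c : H, BddAbove (Set.range fun y : S => dist c y) := by
    intro c
    obtain ⟨ρ, hρ⟩ := hbdd.subset_closedBall c
    exact ⟨ρ, by rintro t ⟨y, rfl⟩; simpa [dist_comm] using hρ y.2⟩
  have hub : ∀ c : H, ∀ y ∈ S, dist c y ≤ r c := fun c y hy =>
    le_ciSup (hbdd' c) ⟨y, hy⟩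
  have hr_le : ∀ c t, (∀ y ∈ S, dist c y ≤ t) → r c ≤ t := fun c t h =>
    ciSup_le fun y => h y y.2
  obtain ⟨y₀, hy₀⟩ := hne
  have hr0 : ∀ c, 0 ≤ r c := fun c => le_trans dist_nonneg (hub c y₀ hy₀)
  set R : ℝ := ⨅ c' : H, ⨆ y : S, dist c' y with hRdef
  have hRbdd : BddBelow (Set.range fun c : H => r c) :=
    ⟨0, by rintro t ⟨c, rfl⟩; exact hr0 c⟩
  have hRle : ∀ c, R ≤ r c := fun c => ciInf_le hRbdd c
  have hR0 : 0 ≤ R := le_ciInf hr0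
  -- key inequality
  have key : ∀ c₁ c₂ : H, dist c₁ c₂ ^ 2 ≤ 2 * r c₁ ^ 2 + 2 * r c₂ ^ 2 - 4 * R ^ 2 := by
    intro c₁ c₂
    set m := midpoint ℝ c₁ c₂
    set E : ℝ := (2 * r c₁ ^ 2 + 2 * r c₂ ^ 2 - dist c₁ c₂ ^ 2) / 4 with hE
    have hdm : ∀ y ∈ S, dist m y ^ 2 ≤ E := by
      intro y hy
      rw [midpoint_dist_sq]
      have h1 := hub c₁ y hy
      have h2 := hub c₂ y hy
      have := dist_nonneg (x := c₁) (y := y)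
      have := dist_nonneg (x := c₂) (y := y)
      simp only [hE]
      gcongr <;> nlinarith
    have hE0 : 0 ≤ E := le_trans (sq_nonneg _) (hdm y₀ hy₀)
    have hrm : r m ≤ Real.sqrt E := by
      apply hr_le
      intro y hy
      exact Real.le_sqrt_of_sq_le (hdm y hy)
    have hRE : R ^ 2 ≤ E := by
      have h1 : R ≤ Real.sqrt E := le_trans (hRle m) hrm
      nlinarith [Real.sq_sqrt hE0, Real.sqrt_nonneg E]
    simp only [hE] at hRE
    nlinarith
  -- minimizing sequence
  have hseq : ∀ n : ℕ, ∃ c : H, r c < R + 1 / (n + 1) := by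
    intro n
    apply exists_lt_of_ciInf_lt
    rw [← hRdef]
    have : (0:ℝ) < 1 / (n + 1) := by positivity
    linarith
  choose cs hcs using hseq
  have hcauchy : CauchySeq cs := by
    refine cauchySeq_of_le_tendsto_0
      (fun N => Real.sqrt (4 * (R + 1 / (N + 1)) ^ 2 - 4 * R ^ 2)) ?_ ?_
    · intro n m N hn hm
      have hmono : ∀ k, N ≤ k → r (cs k) ≤ R + 1 / (N + 1) := by
        intro k hk
        refine le_trans (hcs k).le ?_
        have hk' : (N:ℝ) + 1 ≤ (k:ℝ) + 1 := by exact_mod_cast Nat.succ_le_succ hk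
        have := one_div_le_one_div_of_le (by positivity : (0:ℝ) < (N:ℝ) + 1) hk'
        linarith
      have h1 := hmono n hn
      have h2 := hmono m hm
      have h3 := key (cs n) (cs m)
      have hE0 : (0:ℝ) ≤ 4 * (R + 1 / (N + 1)) ^ 2 - 4 * R ^ 2 := by
        have : (0:ℝ) < 1 / (N + 1) := by positivity
        nlinarith
      have h4 : dist (cs n) (cs m) ^ 2 ≤ 4 * (R + 1 / (N + 1)) ^ 2 - 4 * R ^ 2 := by
        nlinarith [hr0 (cs n), hr0 (cs m)]
      exact Real.le_sqrt_of_sq_le h4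
    · have h1 : Tendsto (fun N : ℕ => 4 * (R + 1 / (N + 1)) ^ 2 - 4 * R ^ 2) atTop (nhds 0) := by
        have h2 : Tendsto (fun N : ℕ => (1:ℝ) / (N + 1)) atTop (nhds 0) :=
          tendsto_one_div_add_atTop_nhds_zero_nat
        have := ((h2.const_add R).pow 2).const_mul (4:ℝ) |>.sub_const (4 * R ^ 2)
        simpa using this
      have := h1.sqrt
      simpa using this
  obtain ⟨c, hc⟩ := cauchySeq_tendsto_of_complete hcauchy
  have hcR : ∀ y ∈ S, dist c y ≤ R := by
    intro y hy
    have hlim : Tendsto (fun n => dist c (cs n) + (R + 1 / (n + 1))) atTop (nhds R) := by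
      have h2 : Tendsto (fun n : ℕ => (1:ℝ) / (n + 1)) atTop (nhds 0) :=
        tendsto_one_div_add_atTop_nhds_zero_nat
      have h3 : Tendsto (fun n => dist c (cs n)) atTop (nhds 0) := by
        simpa using (tendsto_const_nhds (x := c)).dist hc
      simpa using h3.add ((h2.const_add R))
    refine ge_of_tendsto hlim (Eventually.of_forall fun n => ?_)
    calc dist c y ≤ dist c (cs n) + dist (cs n) y := dist_triangle _ _ _
      _ ≤ dist c (cs n) + (R + 1 / (n + 1)) := by
          gcongr
          exact le_trans (hub (cs n) y hy) (hcs n).le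
  refine ⟨c, hcR, ?_⟩
  intro c' hc'
  have hrc : r c = R := le_antisymm (hr_le _ _ hcR) (hRle c)
  have hrc' : r c' = R := le_antisymm (hr_le _ _ hc') (hRle c')
  have := key c' c
  rw [hrc, hrc'] at this
  have : dist c' c = 0 := by nlinarith [dist_nonneg (x := c') (y := c)]
  exact dist_eq_zero.mp this

end Aux

/-- A group acting by isometries on a real Hilbert space with a bounded orbit has a
global fixed point (the circumcenter of the orbit). -/
theorem fixed_point_of_bounded_orbit {G H : Type*} [Group G] [NormedAddCommGroup H]
    [InnerProductSpace ℝ H] [CompleteSpace H] [MulAction G H]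
    (hiso : ∀ (g : G) (u v : H), dist (g • u) (g • v) = dist u v)
    (x : H) (hbdd : Bornology.IsBounded (MulAction.orbit G x)) :
    ∃ c : H, ∀ g : G, g • c = c := by
  obtain ⟨c, hc, huniq⟩ := exists_unique_circumcenter (MulAction.orbit G x)
    (MulAction.nonempty_orbit x) hbdd
  refine ⟨c, fun g => ?_⟩
  apply huniq
  intro y hy
  have hy' : g⁻¹ • y ∈ MulAction.orbit G x := by
    obtain ⟨h, rfl⟩ := hy
    exact ⟨g⁻¹ * h, by simp [mul_smul]⟩
  have : dist (g • c) y = dist c (g⁻¹ • y) := by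
    conv_lhs => rw [show y = g • (g⁻¹ • y) by simp [smul_smul]]
    exact hiso g c (g⁻¹ • y)
  rw [this]
  exact hc _ hy'
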